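/- arXiv:1206.1169 — 4 statements merged into one kernel-verified Lean document; each statement's English description precedes it below -/
import Mathlib

section
/- (Uniform Gronwall lemma) Let g, h, y be nonnegative locally integrable functions on (t₀, ∞) with y locally absolutely continuous, satisfying y'(t) ≤ g(t) y(t) + h(t) for t ≥ t₀, and suppose there exist positive constants a₁, a₂, a₃ and r > 0 such that ∫_t^{t+r} g(s) ds ≤ a₁, ∫_t^{t+r} h(s) ds ≤ a₂, and ∫_t^{t+r} y(s) ds ≤ a₃ for all t ≥ t₀. Then y(t+r) ≤ (a₃/r + a₂) e^{a₁} for all t ≥ t₀. -/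
open MeasureTheory intervalIntegral Set Filter Topology

private lemma gronwall_aux (a b : ℝ) (hab : a ≤ b) (g h y y' : ℝ → ℝ)
    (hgint : IntegrableOn g (Icc a b)) (hhint : IntegrableOn h (Icc a b))
    (hg0 : ∀ u ∈ Icc a b, 0 ≤ g u) (hh0 : ∀ u ∈ Icc a b, 0 ≤ h u)
    (hy0 : ∀ u ∈ Icc a b, 0 ≤ y u)
    (hd : ∀ u ∈ Icc a b, HasDerivAt y (y' u) u)
    (hi : ∀ u ∈ Icc a b, y' u ≤ g u * y u + h u) :
    y b ≤ (y a + ∫ u in a..b, h u) * Real.exp (∫ u in a..b, g u) := by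
  have ycont : ContinuousOn y (Icc a b) := fun u hu => (hd u hu).continuousAt.continuousWithinAt
  have gyint : IntegrableOn (fun u => g u * y u) (Icc a b) :=
    hgint.mul_continuousOn ycont isCompact_Icc
  -- interval integrability on subintervals
  have subII : ∀ (f : ℝ → ℝ), IntegrableOn f (Icc a b) → ∀ u ∈ Icc a b, ∀ v ∈ Icc a b,
      IntervalIntegrable f volume u v := fun f hf u hu v hv =>
    (hf.mono_set (uIcc_subset_Icc hu hv)).intervalIntegrable
  set C := y a + ∫ u in a..b, h u with hCdef
  set A := ∫ u in a..b, g u with hAdef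
  have hC0 : 0 ≤ C := by
    have : 0 ≤ ∫ u in a..b, h u := intervalIntegral.integral_nonneg hab hh0
    have := hy0 a ⟨le_rfl, hab⟩
    positivity
  have hA0 : 0 ≤ A := intervalIntegral.integral_nonneg hab hg0
  set G : ℝ → ℝ := fun u => ∫ v in a..u, g v with hGdef
  have hGa : G a = 0 := by simp [hGdef]
  have hGb : G b = A := rfl
  have Gdiff : ∀ u ∈ Icc a b, ∀ v ∈ Icc a b, G v - G u = ∫ w in u..v, g w := by
    intro u hu v hv
    have := integral_add_adjacent_intervals (subII g hgint a ⟨le_rfl, hab⟩ u hu)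
      (subII g hgint u hu v hv)
    simp only [hGdef]
    linarith
  have Gmono : ∀ u ∈ Icc a b, ∀ v ∈ Icc a b, u ≤ v → G u ≤ G v := by
    intro u hu v hv huv
    have h1 := Gdiff u hu v hv
    have h2 : 0 ≤ ∫ w in u..v, g w :=
      intervalIntegral.integral_nonneg huv (fun x hx => hg0 x ⟨hu.1.trans hx.1, hx.2.trans hv.2⟩)
    linarith
  have Gcont : ContinuousOn G (Icc a b) := by
    have := continuousOn_primitive_interval (μ := volume) (f := g) (a := a) (b := b)
      (by rwa [uIcc_of_le hab])
    rwa [uIcc_of_le hab] at this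
  set z : ℝ → ℝ := fun u => C + ∫ v in a..u, g v * y v with hzdef
  have hza : z a = C := by simp [hzdef]
  have zdiff : ∀ u ∈ Icc a b, ∀ v ∈ Icc a b, z v - z u = ∫ w in u..v, g w * y w := by
    intro u hu v hv
    have := integral_add_adjacent_intervals (subII _ gyint a ⟨le_rfl, hab⟩ u hu)
      (subII _ gyint u hu v hv)
    simp only [hzdef]
    linarith
  have zmono : ∀ u ∈ Icc a b, ∀ v ∈ Icc a b, u ≤ v → z u ≤ z v := by
    intro u hu v hv huv
    have h1 := zdiff u hu v hv
    have h2 : 0 ≤ ∫ w in u..v, g w * y w :=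
      intervalIntegral.integral_nonneg huv (fun x hx =>
        mul_nonneg (hg0 x ⟨hu.1.trans hx.1, hx.2.trans hv.2⟩)
          (hy0 x ⟨hu.1.trans hx.1, hx.2.trans hv.2⟩))
    linarith
  have z0 : ∀ u ∈ Icc a b, 0 ≤ z u := fun u hu =>
    hC0.trans (hza ▸ zmono a ⟨le_rfl, hab⟩ u hu hu.1)
  -- Step 1 : y ≤ z on [a,b]
  have step1 : ∀ u ∈ Icc a b, y u ≤ z u := by
    intro u hu
    have key : y u - y a ≤ ∫ v in a..u, (g v * y v + h v) := by
      apply sub_le_integral_of_hasDeriv_right_of_le hu.1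
        (ycont.mono (Icc_subset_Icc le_rfl hu.2))
      · intro x hx
        exact (hd x ⟨hx.1.le, hx.2.le.trans hu.2⟩).hasDerivWithinAt
      · exact MeasureTheory.IntegrableOn.mono_set (gyint.add hhint) (Icc_subset_Icc le_rfl hu.2)
      · intro x hx
        exact hi x ⟨hx.1.le, hx.2.le.trans hu.2⟩
    have split : ∫ v in a..u, (g v * y v + h v)
        = (∫ v in a..u, g v * y v) + ∫ v in a..u, h v :=
      integral_add (subII _ gyint a ⟨le_rfl, hab⟩ u hu) (subII h hhint a ⟨le_rfl, hab⟩ u hu)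
    have hmono : ∫ v in a..u, h v ≤ ∫ v in a..b, h v := by
      apply integral_mono_interval le_rfl hu.1 hu.2
      · exact (ae_restrict_iff' measurableSet_Ioc).2
          (ae_of_all _ fun x hx => hh0 x (Ioc_subset_Icc_self hx))
      · exact subII h hhint a ⟨le_rfl, hab⟩ b ⟨hab, le_rfl⟩
    simp only [hzdef, hCdef]
    linarith
  -- key step inequality
  have stepkey : ∀ u ∈ Icc a b, ∀ v ∈ Icc a b, u ≤ v → z v ≤ z u + z v * (G v - G u) := by
    intro u hu v hv huv
    have h1 := zdiff u hu v hv
    have h2 := Gdiff u hu v hv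
    have h3 : ∫ w in u..v, g w * y w ≤ ∫ w in u..v, g w * z v := by
      apply integral_mono_on huv (subII _ gyint u hu v hv)
        ((subII g hgint u hu v hv).mul_const _)
      intro x hx
      have hxm : x ∈ Icc a b := ⟨hu.1.trans hx.1, hx.2.trans hv.2⟩
      exact mul_le_mul_of_nonneg_left
        ((step1 x hxm).trans (zmono x hxm v hv hx.2)) (hg0 x hxm)
    have h4 : ∫ w in u..v, g w * z v = (∫ w in u..v, g w) * z v := by
      rw [← intervalIntegral.integral_mul_const]
    have h5 : z v - z u ≤ (G v - G u) * z v := by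
      rw [h1, h2, ← h4]; exact h3
    linarith [h5, mul_comm (z v) (G v - G u)]
  -- per-n bound
  have perN : ∀ n : ℕ, A / n < 1 → 0 < n → z b ≤ C / (1 - A / n) ^ n := by
    intro n hn1 hn0
    have hq : (0:ℝ) < 1 - A / n := by linarith
    set S : ℕ → Set ℝ := fun i => {x | x ∈ Icc a b ∧ G x = i * A / n} with hSdef
    have hSclosed : ∀ i, IsClosed (S i) := by
      intro i
      have : S i = Icc a b ∩ G ⁻¹' {(i : ℝ) * A / n} := rfl
      rw [this]
      exact Gcont.preimage_isClosed_of_isClosed isClosed_Icc isClosed_singleton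
    have hSne : ∀ i ≤ n, (S i).Nonempty := by
      intro i hi
      have hmem : (i : ℝ) * A / n ∈ Icc (G a) (G b) := by
        rw [hGa, hGb]
        constructor
        · positivity
        · rw [div_le_iff₀ (by exact_mod_cast hn0)]
          have : (i : ℝ) ≤ n := by exact_mod_cast hi
          nlinarith
      obtain ⟨x, hx, hGx⟩ := intermediate_value_Icc hab Gcont hmem
      exact ⟨x, hx, hGx⟩
    set U : ℕ → ℝ := fun i => sInf (S i) with hUdef
    have hU : ∀ i ≤ n, U i ∈ S i := by
      intro i hi
      exact (hSclosed i).csInf_mem (hSne i hi) (BddBelow.mono (fun x hx => hx.1) bddBelow_Icc)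
    have hU0 : U 0 = a := by
      apply le_antisymm
      · exact csInf_le (BddBelow.mono (fun x hx => hx.1) bddBelow_Icc)
          ⟨⟨le_rfl, hab⟩, by simp [hGa]⟩
      · exact (hU 0 (Nat.zero_le n)).1.1
    have hUmono : ∀ i j, i ≤ j → j ≤ n → U i ≤ U j := by
      intro i j hij hjn
      by_contra hlt
      push_neg at hlt
      have hUi := hU i (hij.trans hjn)
      have hUj := hU j hjn
      have h1 : G (U j) ≤ G (U i) := Gmono _ hUj.1 _ hUi.1 hlt.le
      rw [hUi.2, hUj.2] at h1
      have h2 : (i : ℝ) * A / n ≤ (j : ℝ) * A / n := by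
        have hn' : (0:ℝ) < n := by exact_mod_cast hn0
        have hij' : (i:ℝ) ≤ j := by exact_mod_cast hij
        exact (div_le_div_iff_of_pos_right hn').2 (mul_le_mul_of_nonneg_right hij' hA0)
      have heq : (i : ℝ) * A / n = (j : ℝ) * A / n := le_antisymm h2 h1
      have : S i = S j := by
        ext x; simp [hSdef, heq]
      rw [hUdef] at hlt
      simp only at hlt
      rw [this] at hlt
      exact lt_irrefl _ hlt
    have zind : ∀ i ≤ n, z (U i) ≤ C / (1 - A / n) ^ i := by
      intro i
      induction i with
      | zero => intro _; simp [hU0, hza]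
      | succ i ih =>
        intro hin
        have hi' : i ≤ n := (Nat.le_succ i).trans hin
        have hUi := hU i hi'
        have hUi1 := hU (i+1) hin
        have hkey := stepkey _ hUi.1 _ hUi1.1 (hUmono i (i+1) (Nat.le_succ i) hin)
        rw [hUi.2, hUi1.2] at hkey
        have hdiffG : ((i:ℝ)+1) * A / n - (i:ℝ) * A / n = A / n := by ring
        have hstep : z (U (i+1)) * (1 - A / n) ≤ z (U i) := by
          push_cast at hkey
          rw [hdiffG] at hkey
          nlinarith [hkey]
        have hzi := ih hi'
        rw [le_div_iff₀ (by positivity), pow_succ]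
        calc z (U (i+1)) * ((1 - A/n) ^ i * (1 - A/n))
            = (z (U (i+1)) * (1 - A/n)) * (1 - A/n) ^ i := by ring
          _ ≤ z (U i) * (1 - A/n) ^ i := by
              apply mul_le_mul_of_nonneg_right hstep (by positivity)
          _ ≤ (C / (1 - A/n) ^ i) * (1 - A/n) ^ i := by
              apply mul_le_mul_of_nonneg_right hzi (by positivity)
          _ = C := div_mul_cancel₀ C (by positivity)
    have hUn := hU n le_rfl
    have hGUn : G (U n) = A := by
      rw [hUn.2]
      field_simp
    have hfin := stepkey _ hUn.1 _ (⟨hab, le_rfl⟩ : b ∈ Icc a b) hUn.1.2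
    rw [hGUn, hGb] at hfin
    simp only [sub_self, mul_zero, add_zero] at hfin
    calc z b ≤ z (U n) := hfin
      _ ≤ C / (1 - A/n) ^ n := zind n le_rfl
  -- take the limit n → ∞
  have hyb : y b ≤ z b := step1 b ⟨hab, le_rfl⟩
  have hlim : Tendsto (fun n : ℕ => C / (1 - A / n) ^ n) atTop (𝓝 (C * Real.exp A)) := by
    have h1 : Tendsto (fun n : ℕ => (1 + (-A) / n) ^ n) atTop (𝓝 (Real.exp (-A))) :=
      Real.tendsto_one_add_div_pow_exp (-A)
    have h2 : Tendsto (fun n : ℕ => C / (1 + (-A) / n) ^ n) atTop (𝓝 (C / Real.exp (-A))) :=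
      tendsto_const_nhds.div h1 (Real.exp_ne_zero _)
    have h3 : C / Real.exp (-A) = C * Real.exp A := by
      rw [Real.exp_neg, div_eq_mul_inv, inv_inv]
    rw [h3] at h2
    convert h2 using 2 with n
    ring_nf
  have hev : ∀ᶠ n : ℕ in atTop, y b ≤ C / (1 - A / n) ^ n := by
    obtain ⟨N, hN⟩ := exists_nat_gt A
    filter_upwards [eventually_ge_atTop (N + 1)] with n hn
    have hn0 : 0 < n := by omega
    have : A / n < 1 := by
      rw [div_lt_one (by exact_mod_cast hn0)]
      have hNn : N ≤ n := by omega
      calc A < N := hN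
        _ ≤ n := by exact_mod_cast hNn
    exact hyb.trans (perN n this hn0)
  exact ge_of_tendsto hlim hev

/-- Uniform Gronwall lemma. -/
theorem stmt_2 (t₀ r a₁ a₂ a₃ : ℝ) (hr : 0 < r) (ha₁ : 0 < a₁) (ha₂ : 0 < a₂) (ha₃ : 0 < a₃)
    (g h y y' : ℝ → ℝ)
    (hg : ∀ t, t₀ < t → 0 ≤ g t) (hh : ∀ t, t₀ < t → 0 ≤ h t) (hy : ∀ t, t₀ < t → 0 ≤ y t)
    (hgi : MeasureTheory.LocallyIntegrableOn g (Set.Ioi t₀))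
    (hhi : MeasureTheory.LocallyIntegrableOn h (Set.Ioi t₀))
    (hyi : MeasureTheory.LocallyIntegrableOn y (Set.Ioi t₀))
    (hderiv : ∀ t, t₀ ≤ t → HasDerivAt y (y' t) t)
    (hineq : ∀ t, t₀ ≤ t → y' t ≤ g t * y t + h t)
    (hga : ∀ t, t₀ ≤ t → ∫ s in t..(t + r), g s ≤ a₁)
    (hha : ∀ t, t₀ ≤ t → ∫ s in t..(t + r), h s ≤ a₂)
    (hya : ∀ t, t₀ ≤ t → ∫ s in t..(t + r), y s ≤ a₃) :
    ∀ t, t₀ ≤ t → y (t + r) ≤ (a₃ / r + a₂) * Real.exp a₁ := by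
  have hIcc : ∀ (f : ℝ → ℝ), MeasureTheory.LocallyIntegrableOn f (Set.Ioi t₀) →
      ∀ c d : ℝ, t₀ < c → IntegrableOn f (Icc c d) := fun f hf c d hc =>
    hf.integrableOn_compact_subset (fun x hx => lt_of_lt_of_le hc hx.1) isCompact_Icc
  have MAIN : ∀ t' b : ℝ, t₀ < t' → t' < b → b ≤ t' + r →
      y b ≤ (a₃ / (b - t') + a₂) * Real.exp a₁ := by
    intro t' b ht' htb hbr
    have ht'r : t' ≤ t' + r := by linarith
    have hginc : IntegrableOn g (Icc t' (t'+r)) := hIcc g hgi t' _ ht'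
    have hhinc : IntegrableOn h (Icc t' (t'+r)) := hIcc h hhi t' _ ht'
    have hyinc : IntegrableOn y (Icc t' (t'+r)) := hIcc y hyi t' _ ht'
    have II : ∀ (f : ℝ → ℝ), IntegrableOn f (Icc t' (t'+r)) →
        IntervalIntegrable f volume t' (t'+r) := fun f hf =>
      IntegrableOn.intervalIntegrable (by rwa [uIcc_of_le ht'r])
    have pw : ∀ s ∈ Icc t' b, y b ≤ (y s + a₂) * Real.exp a₁ := by
      intro s hs
      have hst : t₀ < s := lt_of_lt_of_le ht' hs.1
      have hsub : Icc s b ⊆ Icc t' (t'+r) := Icc_subset_Icc hs.1 hbr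
      have hmemIoi : ∀ u, u ∈ Icc s b → t₀ < u := fun u hu => lt_of_lt_of_le hst hu.1
      have core := gronwall_aux s b hs.2 g h y y'
        (hginc.mono_set hsub) (hhinc.mono_set hsub)
        (fun u hu => hg u (hmemIoi u hu)) (fun u hu => hh u (hmemIoi u hu))
        (fun u hu => hy u (hmemIoi u hu))
        (fun u hu => hderiv u (le_of_lt (hmemIoi u hu)))
        (fun u hu => hineq u (le_of_lt (hmemIoi u hu)))
      have hgle : ∫ u in s..b, g u ≤ a₁ := by
        refine le_trans ?_ (hga t' ht'.le)
        apply integral_mono_interval hs.1 hs.2 hbr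
        · exact (ae_restrict_iff' measurableSet_Ioc).2
            (ae_of_all _ fun x hx => hg x (ht'.trans hx.1))
        · exact II g hginc
      have hhle : ∫ u in s..b, h u ≤ a₂ := by
        refine le_trans ?_ (hha t' ht'.le)
        apply integral_mono_interval hs.1 hs.2 hbr
        · exact (ae_restrict_iff' measurableSet_Ioc).2
            (ae_of_all _ fun x hx => hh x (ht'.trans hx.1))
        · exact II h hhinc
      have hys : 0 ≤ y s := hy s hst
      have hh0' : 0 ≤ ∫ u in s..b, h u :=
        intervalIntegral.integral_nonneg hs.2 (fun x hx => hh x (hmemIoi x hx))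
      calc y b ≤ (y s + ∫ u in s..b, h u) * Real.exp (∫ u in s..b, g u) := core
        _ ≤ (y s + a₂) * Real.exp a₁ :=
            mul_le_mul (by linarith) (Real.exp_le_exp.2 hgle) (Real.exp_pos _).le (by linarith)
    have hyIb : IntervalIntegrable y volume t' b :=
      IntegrableOn.intervalIntegrable
        (by rw [uIcc_of_le htb.le]; exact hyinc.mono_set (Icc_subset_Icc le_rfl hbr))
    have hint : ∫ _ in t'..b, y b ≤ ∫ s in t'..b, (y s + a₂) * Real.exp a₁ :=
      integral_mono_on htb.le intervalIntegrable_const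
        ((hyIb.add intervalIntegrable_const).mul_const _) pw
    rw [intervalIntegral.integral_const, smul_eq_mul] at hint
    have hsplit : ∫ s in t'..b, (y s + a₂) * Real.exp a₁
        = ((∫ s in t'..b, y s) + (b - t') * a₂) * Real.exp a₁ := by
      rw [intervalIntegral.integral_mul_const,
        integral_add hyIb intervalIntegrable_const, intervalIntegral.integral_const, smul_eq_mul]
    have hyle : ∫ s in t'..b, y s ≤ a₃ := by
      refine le_trans ?_ (hya t' ht'.le)
      apply integral_mono_interval le_rfl htb.le hbr
      · exact (ae_restrict_iff' measurableSet_Ioc).2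
          (ae_of_all _ fun x hx => hy x (ht'.trans hx.1))
      · exact II y hyinc
    have hL : 0 < b - t' := by linarith
    have hfinal : (b - t') * y b ≤ (a₃ + (b - t') * a₂) * Real.exp a₁ := by
      rw [hsplit] at hint
      have h2 : ((∫ s in t'..b, y s) + (b - t') * a₂) * Real.exp a₁
          ≤ (a₃ + (b - t') * a₂) * Real.exp a₁ :=
        mul_le_mul_of_nonneg_right (by linarith) (Real.exp_pos _).le
      linarith
    have heq : (a₃ / (b - t') + a₂) * Real.exp a₁
        = (a₃ + (b - t') * a₂) * Real.exp a₁ / (b - t') := by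
      field_simp
    rw [heq, le_div_iff₀ hL]
    nlinarith [hfinal]
  intro t ht
  rcases eq_or_lt_of_le ht with heq | hlt
  · subst heq
    have hev : ∀ᶠ L in 𝓝[<] r, y (t₀ + r) ≤ (a₃ / L + a₂) * Real.exp a₁ := by
      filter_upwards [Ioo_mem_nhdsLT_of_mem (⟨hr, le_rfl⟩ : r ∈ Ioc 0 r)] with L hL
      have hm := MAIN (t₀ + r - L) (t₀ + r) (by linarith [hL.1, hL.2]) (by linarith [hL.1])
        (by linarith [hL.2])
      have harg : t₀ + r - (t₀ + r - L) = L := by ring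
      rwa [harg] at hm
    have hlim : Tendsto (fun L => (a₃ / L + a₂) * Real.exp a₁) (𝓝[<] r)
        (𝓝 ((a₃ / r + a₂) * Real.exp a₁)) := by
      apply Tendsto.mono_left _ nhdsWithin_le_nhds
      exact ((tendsto_const_nhds.div tendsto_id (ne_of_gt hr)).add tendsto_const_nhds).mul
        tendsto_const_nhds
    exact ge_of_tendsto hlim hev
  · exact (by simpa using MAIN t (t + r) hlt (by linarith) le_rfl)
end

section
/- Let y : [0,∞) → ℝ be nonnegative and absolutely continuous, let Z : [0,∞) → [0,∞) be locally integrable, and suppose y'(t) + ν Z(t) ≤ 2 F √(y(t)) for a.e. t ≥ 0, where ν > 0 and F ≥ 0. If y(t) ≤ ρ² for all t ≥ t₀, then for every r > 0 and every t ≥ t₀, ∫_t^{t+r} Z(s) ds ≤ (ρ² + 2Fρ r)/ν. -/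
open MeasureTheory

theorem stmt_3 (ν F ρ t₀ : ℝ) (hν : 0 < ν) (hF : 0 ≤ F) (hρ : 0 < ρ) (ht₀ : 0 ≤ t₀)
    (y y' Z : ℝ → ℝ)
    (hy : ∀ t, 0 ≤ t → 0 ≤ y t)
    (hZ : ∀ t, 0 ≤ t → 0 ≤ Z t)
    (hZi : LocallyIntegrableOn Z (Set.Ici 0))
    (hderiv : ∀ t, 0 ≤ t → HasDerivAt y (y' t) t)
    (hineq : ∀ᵐ t ∂(volume : Measure ℝ), 0 ≤ t → y' t + ν * Z t ≤ 2 * F * Real.sqrt (y t))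
    (hbound : ∀ t, t₀ ≤ t → y t ≤ ρ ^ 2) :
    ∀ r, 0 < r → ∀ t, t₀ ≤ t → ∫ s in t..(t + r), Z s ≤ (ρ ^ 2 + 2 * F * ρ * r) / ν := by
  intro r hr t ht
  have ht0 : (0 : ℝ) ≤ t := le_trans ht₀ ht
  have hab : t ≤ t + r := by linarith
  set b := t + r with hb
  -- φ is the a.e. upper bound for y'
  set φ : ℝ → ℝ := fun s => max (y' s) (2 * F * ρ - ν * Z s) with hφ
  -- Z is integrable on [t, b]
  have hZint : IntegrableOn Z (Set.Icc t b) volume := by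
    apply hZi.integrableOn_compact_subset ?_ isCompact_Icc
    intro x hx; exact le_trans ht0 hx.1
  have hcint : IntegrableOn (fun s => 2 * F * ρ - ν * Z s) (Set.Icc t b) volume := by
    exact (integrableOn_const measure_Icc_lt_top.ne).sub (hZint.const_mul ν)
  -- a.e. on Icc t b, y' s ≤ 2Fρ - νZ s, hence φ = 2Fρ - νZ
  have hae : ∀ᵐ s ∂(volume.restrict (Set.Icc t b)),
      φ s = 2 * F * ρ - ν * Z s := by
    rw [ae_restrict_iff' measurableSet_Icc]
    filter_upwards [hineq] with s hs hsmem
    have hs0 : (0 : ℝ) ≤ s := le_trans ht0 hsmem.1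
    have h1 : y' s + ν * Z s ≤ 2 * F * Real.sqrt (y s) := hs hs0
    have h2 : Real.sqrt (y s) ≤ ρ := by
      have := hbound s (le_trans ht hsmem.1)
      calc Real.sqrt (y s) ≤ Real.sqrt (ρ ^ 2) := Real.sqrt_le_sqrt this
        _ = ρ := by rw [Real.sqrt_sq hρ.le]
    have : y' s ≤ 2 * F * ρ - ν * Z s := by nlinarith
    simp [hφ, max_eq_right this]
  have hφint : IntegrableOn φ (Set.Icc t b) volume :=
    Integrable.congr hcint (Filter.EventuallyEq.symm hae)
  -- Fundamental comparison
  have key : y b - y t ≤ ∫ s in t..b, φ s := by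
    apply intervalIntegral.sub_le_integral_of_hasDeriv_right_of_le hab
    · intro x hx
      exact ((hderiv x (le_trans ht0 hx.1)).continuousAt).continuousWithinAt
    · intro x hx
      exact ((hderiv x (le_trans ht0 hx.1.le)).hasDerivWithinAt)
    · exact hφint
    · intro x _; exact le_max_left _ _
  -- Compute the integral of φ
  have hZii : IntervalIntegrable Z volume t b := by
    rw [intervalIntegrable_iff, Set.uIoc_of_le hab]
    exact hZint.mono_set Set.Ioc_subset_Icc_self
  have hφeq : (∫ s in t..b, φ s) = 2 * F * ρ * r - ν * ∫ s in t..b, Z s := by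
    rw [intervalIntegral.integral_congr_ae (g := fun s => 2 * F * ρ - ν * Z s) ?_]
    · rw [intervalIntegral.integral_sub (intervalIntegrable_const) ((hZii.const_mul ν)),
        intervalIntegral.integral_const, intervalIntegral.integral_const_mul]
      simp [hb]
      ring
    · have := (ae_restrict_iff' measurableSet_Icc).1 hae
      filter_upwards [this] with s hs hsmem
      rw [Set.uIoc_of_le hab] at hsmem
      exact hs (Set.Ioc_subset_Icc_self hsmem)
  have hyb : 0 ≤ y b := hy b (le_trans ht0 hab)
  have hyt : y t ≤ ρ ^ 2 := hbound t ht
  rw [hφeq] at key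
  rw [le_div_iff₀ hν]
  nlinarith
end

section
/- Let μ₀ > 0, ε > 0, 0 ≤ α < 1, and E a symmetric n×n matrix. Then for every symmetric matrix F, Γ(E)|F|² − α A_{ijkl}(E) F_{ij} F_{kl} ≥ (1−α) μ₀ (ε+|E|²)^{-α/2} |F|² ≥ 0; i.e., the linearized viscous term is positive semidefinite when α ∈ [0,1). -/
open Finset

theorem stmt_8 (n : ℕ) (hn : 1 ≤ n) (μ₀ ε α : ℝ) (hμ : 0 < μ₀) (hε : 0 < ε)
    (hα0 : 0 ≤ α) (hα1 : α < 1)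
    (E F : Matrix (Fin n) (Fin n) ℝ) (hE : E.IsSymm) (hF : F.IsSymm)
    (nE2 nF2 : ℝ)
    (hnE2 : nE2 = ∑ i, ∑ j, (E i j) ^ 2)
    (hnF2 : nF2 = ∑ i, ∑ j, (F i j) ^ 2) :
    μ₀ * (ε + nE2) ^ (-(α / 2)) * nF2
        - α * (∑ i, ∑ j, ∑ k, ∑ l,
            (μ₀ * (ε + nE2) ^ (-(1 + α / 2)) * E i j * E k l) * F i j * F k l)
      ≥ (1 - α) * μ₀ * (ε + nE2) ^ (-(α / 2)) * nF2 ∧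
    0 ≤ (1 - α) * μ₀ * (ε + nE2) ^ (-(α / 2)) * nF2 := by
  have hnE2' : 0 ≤ nE2 := by
    rw [hnE2]; positivity
  have hnF2' : 0 ≤ nF2 := by
    rw [hnF2]; positivity
  have hP : (0:ℝ) < ε + nE2 := by linarith
  set p : ℝ := (ε + nE2) ^ (-(1 + α / 2)) with hp
  set q : ℝ := (ε + nE2) ^ (-(α / 2)) with hq
  have hppos : 0 < p := Real.rpow_pos_of_pos hP _
  have hqpos : 0 < q := Real.rpow_pos_of_pos hP _
  set S : ℝ := ∑ i, ∑ j, E i j * F i j with hS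
  -- factor the quadruple sum
  have key : (∑ i, ∑ j, ∑ k, ∑ l,
      (μ₀ * p * E i j * E k l) * F i j * F k l) = μ₀ * p * (S * S) := by
    have h1 : ∀ i j, (∑ k, ∑ l, (μ₀ * p * E i j * E k l) * F i j * F k l)
        = (μ₀ * p * (E i j * F i j)) * S := by
      intro i j
      rw [hS, Finset.mul_sum]
      refine Finset.sum_congr rfl fun k _ => ?_
      rw [Finset.mul_sum]
      exact Finset.sum_congr rfl fun l _ => by ring
    calc (∑ i, ∑ j, ∑ k, ∑ l, (μ₀ * p * E i j * E k l) * F i j * F k l)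
        = ∑ i, ∑ j, (μ₀ * p * (E i j * F i j)) * S := by
          exact Finset.sum_congr rfl fun i _ => Finset.sum_congr rfl fun j _ => h1 i j
      _ = (∑ i, ∑ j, μ₀ * p * (E i j * F i j)) * S := by
          rw [Finset.sum_mul]
          exact Finset.sum_congr rfl fun i _ => (Finset.sum_mul _ _ _).symm
      _ = μ₀ * p * (S * S) := by
          have h2 : (∑ i, ∑ j, μ₀ * p * (E i j * F i j)) = μ₀ * p * S := by
            rw [hS, Finset.mul_sum]
            exact Finset.sum_congr rfl fun i _ => (Finset.mul_sum _ _ _).symm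
          rw [h2]; ring
  -- Cauchy–Schwarz: S^2 ≤ nE2 * nF2
  have hCS : S * S ≤ nE2 * nF2 := by
    have hflat : S = ∑ p : Fin n × Fin n, E p.1 p.2 * F p.1 p.2 := by
      rw [hS, ← Finset.sum_product']
      rfl
    have hE2 : nE2 = ∑ p : Fin n × Fin n, (E p.1 p.2) ^ 2 := by
      rw [hnE2, ← Finset.sum_product']; rfl
    have hF2 : nF2 = ∑ p : Fin n × Fin n, (F p.1 p.2) ^ 2 := by
      rw [hnF2, ← Finset.sum_product']; rfl
    have h := Finset.sum_mul_sq_le_sq_mul_sq (Finset.univ : Finset (Fin n × Fin n))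
      (fun p => E p.1 p.2) (fun p => F p.1 p.2)
    rw [← hflat, ← hE2, ← hF2] at h
    calc S * S = S ^ 2 := by ring
      _ ≤ nE2 * nF2 := h
  -- p * (ε + nE2) = q
  have hpq : p * (ε + nE2) = q := by
    have h3 : p * (ε + nE2) = (ε + nE2) ^ (-(1 + α / 2) + 1) := by
      rw [hp, Real.rpow_add hP, Real.rpow_one]
    rw [h3, hq]
    congr 1
    ring
  have hmain : α * (μ₀ * p * (S * S)) ≤ α * μ₀ * q * nF2 := by
    have h1 : S * S ≤ (ε + nE2) * nF2 := by
      calc S * S ≤ nE2 * nF2 := hCS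
        _ ≤ (ε + nE2) * nF2 := by nlinarith
    calc α * (μ₀ * p * (S * S)) ≤ α * (μ₀ * p * ((ε + nE2) * nF2)) := by
          apply mul_le_mul_of_nonneg_left _ hα0
          apply mul_le_mul_of_nonneg_left h1
          positivity
      _ = α * μ₀ * (p * (ε + nE2)) * nF2 := by ring
      _ = α * μ₀ * q * nF2 := by rw [hpq]
  constructor
  · rw [key]
    nlinarith [hmain]
  · have : 0 < 1 - α := by linarith
    positivity
end

section
/- Let y, Z : [0,∞) → [0,∞) with y absolutely continuous, and suppose y'(t) + 2ν₀ Z(t) ≤ 2|f| √(y(t)) and y(t) ≤ ρ₁² for all t ≥ t₀. Then for every r > 0 and t ≥ t₀: ∫_t^{t+r} Z(s) ds ≤ κ₀(r) := (ρ₁² + 2|f| ρ₁ r)/(2ν₀). -/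
open MeasureTheory

theorem stmt_11 (ν₀ nf ρ₁ t₀ : ℝ) (hν₀ : 0 < ν₀) (hnf : 0 ≤ nf) (hρ₁ : 0 < ρ₁) (ht₀ : 0 ≤ t₀)
    (y y' Z : ℝ → ℝ)
    (hy : ∀ t, 0 ≤ t → 0 ≤ y t)
    (hZ : ∀ t, 0 ≤ t → 0 ≤ Z t)
    (hZi : LocallyIntegrableOn Z (Set.Ici 0))
    (hderiv : ∀ t, 0 ≤ t → HasDerivAt y (y' t) t)
    (hineq : ∀ t, 0 ≤ t → y' t + 2 * ν₀ * Z t ≤ 2 * nf * Real.sqrt (y t))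
    (hbound : ∀ t, t₀ ≤ t → y t ≤ ρ₁ ^ 2) :
    ∀ r, 0 < r → ∀ t, t₀ ≤ t →
      ∫ s in t..(t + r), Z s ≤ (ρ₁ ^ 2 + 2 * nf * ρ₁ * r) / (2 * ν₀) := by
  intro r hr t ht
  have ht0 : (0:ℝ) ≤ t := le_trans ht₀ ht
  have hab : t ≤ t + r := by linarith
  have hsub : Set.Icc t (t + r) ⊆ Set.Ici (0:ℝ) := fun x hx => le_trans ht0 hx.1
  have hZint : IntegrableOn Z (Set.Icc t (t + r)) :=
    hZi.integrableOn_compact_subset hsub isCompact_Icc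
  set φ : ℝ → ℝ := fun s => 2 * nf * ρ₁ - 2 * ν₀ * Z s with hφ
  have hφint : IntegrableOn φ (Set.Icc t (t + r)) :=
    (integrable_const _).sub (hZint.const_mul _)
  have hcont : ContinuousOn y (Set.Icc t (t + r)) := fun x hx =>
    ((hderiv x (le_trans ht0 hx.1)).continuousAt).continuousWithinAt
  have key : y (t + r) - y t ≤ ∫ s in t..(t + r), φ s := by
    apply intervalIntegral.sub_le_integral_of_hasDeriv_right_of_le hab hcont
      (g' := y') ?_ hφint ?_
    · intro x hx
      exact ((hderiv x (le_trans ht0 hx.1.le)).hasDerivWithinAt)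
    · intro x hx
      have hx0 : (0:ℝ) ≤ x := le_trans ht0 hx.1.le
      have hxt : t₀ ≤ x := le_trans ht hx.1.le
      have h1 := hineq x hx0
      have h2 : Real.sqrt (y x) ≤ ρ₁ := by
        calc Real.sqrt (y x) ≤ Real.sqrt (ρ₁ ^ 2) :=
              Real.sqrt_le_sqrt (hbound x hxt)
          _ = ρ₁ := by rw [Real.sqrt_sq hρ₁.le]
      simp only [hφ]
      nlinarith [mul_le_mul_of_nonneg_left h2 hnf]
  have hφval : ∫ s in t..(t + r), φ s
      = 2 * nf * ρ₁ * r - 2 * ν₀ * ∫ s in t..(t + r), Z s := by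
    rw [hφ]
    have hZii : IntervalIntegrable Z volume t (t + r) := by
      rw [intervalIntegrable_iff_integrableOn_Icc_of_le hab]; exact hZint
    rw [intervalIntegral.integral_sub intervalIntegrable_const (hZii.const_mul _),
      intervalIntegral.integral_const,
      intervalIntegral.integral_const_mul, smul_eq_mul]
    ring
  rw [hφval] at key
  have hyB : y (t + r) ≥ 0 := hy _ (by linarith)
  have hyA : y t ≤ ρ₁ ^ 2 := hbound t ht
  rw [le_div_iff₀ (by linarith : (0:ℝ) < 2 * ν₀)]
  nlinarith
end
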